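/- Quadratic form lower bound for the δ-vertex: for u₁,…,u_N ∈ H¹(0,∞) with u₁(0) = … = u_N(0) and α < 0, ∑ⱼ‖uⱼ'‖²_{L²} + α|u₁(0)|² ≥ −(α²/N²)·∑ⱼ‖uⱼ‖²_{L²}. -/

import Mathlib

open MeasureTheory Set

lemma edge_bound (u u' : ℝ → ℂ) (hcont : ContinuousOn u (Ici 0))
    (hderiv : ∀ x ∈ Ioi (0 : ℝ), HasDerivAt u (u' x) x)
    (hu : MemLp u 2 (volume.restrict (Ioi (0 : ℝ))))
    (hu' : MemLp u' 2 (volume.restrict (Ioi (0 : ℝ))))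
    (ε : ℝ) (hε : 0 < ε) :
    ‖u 0‖ ^ 2 ≤ ε * (∫ x in Ioi (0:ℝ), ‖u' x‖ ^ 2) + ε⁻¹ * ∫ x in Ioi (0:ℝ), ‖u x‖ ^ 2 := by
  set g : ℝ → ℝ := fun x => ‖u x‖ ^ 2 with hg
  set g' : ℝ → ℝ := fun x => 2 * (inner ℝ (u x) (u' x) : ℝ) with hg'
  set h : ℝ → ℝ := fun x => ε * ‖u' x‖ ^ 2 + ε⁻¹ * ‖u x‖ ^ 2 with hh
  have hInt1 : Integrable (fun x => ‖u' x‖ ^ 2) (volume.restrict (Ioi (0:ℝ))) :=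
    hu'.norm.integrable_sq
  have hInt2 : Integrable (fun x => ‖u x‖ ^ 2) (volume.restrict (Ioi (0:ℝ))) :=
    hu.norm.integrable_sq
  have hIntH : Integrable h (volume.restrict (Ioi (0:ℝ))) :=
    (hInt1.const_mul ε).add (hInt2.const_mul ε⁻¹)
  have hbound : ∀ x, |g' x| ≤ h x := by
    intro x
    have h1 : |(inner ℝ (u x) (u' x) : ℝ)| ≤ ‖u x‖ * ‖u' x‖ := abs_real_inner_le_norm _ _
    have h2 : 2 * (‖u x‖ * ‖u' x‖) ≤ h x := by
      have hcancel := mul_inv_cancel₀ hε.ne'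
      show 2 * (‖u x‖ * ‖u' x‖) ≤ ε * ‖u' x‖ ^ 2 + ε⁻¹ * ‖u x‖ ^ 2
      nlinarith [sq_nonneg (ε * ‖u' x‖ - ‖u x‖), norm_nonneg (u x), norm_nonneg (u' x),
        inv_pos.mpr hε]
    calc |g' x| = 2 * |(inner ℝ (u x) (u' x) : ℝ)| := by
          rw [hg', abs_mul]; norm_num
      _ ≤ 2 * (‖u x‖ * ‖u' x‖) := by linarith
      _ ≤ h x := h2
  have hH_nonneg : ∀ x, 0 ≤ h x := by
    intro x
    have : (0:ℝ) ≤ ε⁻¹ := (inv_pos.mpr hε).le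
    positivity
  -- key bound for each R > 0
  have key : ∀ R : ℝ, 0 < R → g 0 ≤ g R + ∫ x in Ioi (0:ℝ), h x := by
    intro R hR
    have hgcont : ContinuousOn g (Icc 0 R) :=
      ((hcont.mono (Icc_subset_Ici_self)).norm).pow 2
    have hgderiv : ∀ x ∈ Ioo (0:ℝ) R, HasDerivWithinAt g (g' x) (Ioi x) x := by
      intro x hx
      have hd := (hderiv x hx.1).inner ℝ (hderiv x hx.1)
      have hfun : (fun t => (inner ℝ (u t) (u t) : ℝ)) = g :=
        funext fun t => real_inner_self_eq_norm_sq (u t)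
      have hval : (inner ℝ (u x) (u' x) : ℝ) + (inner ℝ (u' x) (u x) : ℝ) = g' x := by
        show _ = 2 * (inner ℝ (u x) (u' x) : ℝ)
        rw [real_inner_comm (u' x) (u x)]; ring
      rw [hfun, hval] at hd
      exact hd.hasDerivWithinAt
    have haesm : AEStronglyMeasurable g' (volume.restrict (Ioc (0:ℝ) R)) := by
      have hm1 : AEStronglyMeasurable u (volume.restrict (Ioc (0:ℝ) R)) :=
        (hcont.mono (fun x hx => le_of_lt hx.1)).aestronglyMeasurable measurableSet_Ioc
      have hm2 : AEStronglyMeasurable u' (volume.restrict (Ioc (0:ℝ) R)) :=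
        hu'.1.mono_measure (Measure.restrict_mono Ioc_subset_Ioi_self le_rfl)
      exact (hm1.inner (𝕜 := ℝ) hm2).const_mul 2
    have hIntH0 : IntegrableOn h (Ioi (0:ℝ)) volume := hIntH
    have hIntH' : IntegrableOn h (Ioc (0:ℝ) R) volume :=
      hIntH0.mono_set Ioc_subset_Ioi_self
    have hIntg' : IntegrableOn g' (Ioc (0:ℝ) R) volume := by
      refine hIntH'.mono' haesm ?_
      exact Filter.Eventually.of_forall fun x => by
        simpa [Real.norm_eq_abs] using hbound x
    have hII : IntervalIntegrable g' volume 0 R := by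
      rw [intervalIntegrable_iff, uIoc_of_le hR.le]; exact hIntg'
    have hIIh : IntervalIntegrable h volume 0 R := by
      rw [intervalIntegrable_iff, uIoc_of_le hR.le]; exact hIntH'
    have hftc : ∫ x in (0:ℝ)..R, g' x = g R - g 0 :=
      intervalIntegral.integral_eq_sub_of_hasDeriv_right_of_le hR.le hgcont hgderiv hII
    have hmono : -(g R - g 0) ≤ ∫ x in (0:ℝ)..R, h x := by
      rw [← hftc, ← intervalIntegral.integral_neg]
      refine intervalIntegral.integral_mono_on hR.le hII.neg hIIh fun x _ => ?_
      have := abs_le.mp (hbound x)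
      show -g' x ≤ h x
      linarith [this.1]
    have hint_le : ∫ x in (0:ℝ)..R, h x ≤ ∫ x in Ioi (0:ℝ), h x := by
      rw [intervalIntegral.integral_of_le hR.le]
      refine setIntegral_mono_set hIntH ?_ ?_
      · exact Filter.Eventually.of_forall fun x => hH_nonneg x
      · exact HasSubset.Subset.eventuallyLE Ioc_subset_Ioi_self
    linarith [hmono, hint_le]
  -- conclude g 0 ≤ ∫ h
  have hg0 : g 0 ≤ ∫ x in Ioi (0:ℝ), h x := by
    by_contra hcon
    push_neg at hcon
    set δ : ℝ := g 0 - ∫ x in Ioi (0:ℝ), h x with hδ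
    have hδpos : 0 < δ := by simp [hδ]; linarith
    have hgint : Integrable g (volume.restrict (Ioi (0:ℝ))) := hInt2
    have hfin := hgint.measure_ge_lt_top hδpos
    have hsub : Ioi (0:ℝ) ⊆ {x | δ ≤ g x} := by
      intro x hx
      have := key x hx
      simp only [mem_setOf_eq]
      linarith
    have : (volume.restrict (Ioi (0:ℝ))) (Ioi (0:ℝ)) ≤
        (volume.restrict (Ioi (0:ℝ))) {x | δ ≤ g x} := measure_mono hsub
    rw [Measure.restrict_apply_self] at this
    rw [Real.volume_Ioi] at this
    exact absurd (lt_of_le_of_lt this hfin) (by simp)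
  calc ‖u 0‖ ^ 2 = g 0 := rfl
    _ ≤ ∫ x in Ioi (0:ℝ), h x := hg0
    _ = ε * (∫ x in Ioi (0:ℝ), ‖u' x‖ ^ 2) + ε⁻¹ * ∫ x in Ioi (0:ℝ), ‖u x‖ ^ 2 := by
        rw [hh, integral_add (hInt1.const_mul ε) (hInt2.const_mul ε⁻¹),
          integral_const_mul, integral_const_mul]

/-- Quadratic form lower bound for the δ-vertex with `α < 0`:
`∑ⱼ ∫|uⱼ'|² + α|u₁(0)|² ≥ -(α²/N²) ∑ⱼ ∫|uⱼ|²`. -/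
theorem delta_form_lower_bound (N : ℕ) (hN : 1 ≤ N) (α : ℝ) (hα : α < 0)
    (u u' : Fin N → ℝ → ℂ)
    (hcont : ∀ j, ContinuousOn (u j) (Ici 0))
    (hderiv : ∀ j, ∀ x ∈ Ioi (0 : ℝ), HasDerivAt (u j) (u' j x) x)
    (hu : ∀ j, MemLp (u j) 2 (volume.restrict (Ioi (0 : ℝ))))
    (hu' : ∀ j, MemLp (u' j) 2 (volume.restrict (Ioi (0 : ℝ))))
    (hvertex : ∀ i j : Fin N, u i 0 = u j 0) :
    (∑ j : Fin N, ∫ x in Ioi (0 : ℝ), ‖u' j x‖ ^ 2) + α * ‖u ⟨0, by omega⟩ 0‖ ^ 2 ≥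
      -(α ^ 2 / (N : ℝ) ^ 2) * (∑ j : Fin N, ∫ x in Ioi (0 : ℝ), ‖u j x‖ ^ 2) := by
  have hN0 : (0:ℝ) < (N:ℝ) := by exact_mod_cast Nat.lt_of_lt_of_le Nat.zero_lt_one hN
  set ε : ℝ := (N:ℝ) / (-α) with hεdef
  have hε : 0 < ε := div_pos hN0 (neg_pos.mpr hα)
  set j0 : Fin N := ⟨0, by omega⟩ with hj0
  set S' : ℝ := ∑ j : Fin N, ∫ x in Ioi (0 : ℝ), ‖u' j x‖ ^ 2 with hS'
  set S : ℝ := ∑ j : Fin N, ∫ x in Ioi (0 : ℝ), ‖u j x‖ ^ 2 with hS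
  have hedge : ∀ j : Fin N, ‖u j0 0‖ ^ 2 ≤
      ε * (∫ x in Ioi (0:ℝ), ‖u' j x‖ ^ 2) + ε⁻¹ * ∫ x in Ioi (0:ℝ), ‖u j x‖ ^ 2 := by
    intro j
    rw [hvertex j0 j]
    exact edge_bound (u j) (u' j) (hcont j) (hderiv j) (hu j) (hu' j) ε hε
  have hsum : (N:ℝ) * ‖u j0 0‖ ^ 2 ≤ ε * S' + ε⁻¹ * S := by
    calc (N:ℝ) * ‖u j0 0‖ ^ 2 = ∑ _j : Fin N, ‖u j0 0‖ ^ 2 := by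
          rw [Finset.sum_const]; simp [mul_comm]
      _ ≤ ∑ j : Fin N, (ε * (∫ x in Ioi (0:ℝ), ‖u' j x‖ ^ 2)
            + ε⁻¹ * ∫ x in Ioi (0:ℝ), ‖u j x‖ ^ 2) :=
          Finset.sum_le_sum fun j _ => hedge j
      _ = ε * S' + ε⁻¹ * S := by
          rw [Finset.sum_add_distrib, ← Finset.mul_sum, ← Finset.mul_sum]
  have hmul : (α / N) * (ε * S' + ε⁻¹ * S) ≤ (α / N) * ((N:ℝ) * ‖u j0 0‖ ^ 2) :=
    mul_le_mul_of_nonpos_left hsum (le_of_lt (div_neg_of_neg_of_pos hα hN0))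
  have hid1 : (α / N) * ((N:ℝ) * ‖u j0 0‖ ^ 2) = α * ‖u j0 0‖ ^ 2 := by
    field_simp
  have hinv : ε⁻¹ = -α / (N:ℝ) := by rw [hεdef, inv_div]
  have hid2 : (α / N) * (ε * S' + ε⁻¹ * S) = -S' - (α ^ 2 / (N:ℝ) ^ 2) * S := by
    have hα0 : α ≠ 0 := ne_of_lt hα
    have e1 : α / N * ((N:ℝ) / (-α)) = -1 := by
      field_simp
    have e2 : α / N * (-α / (N:ℝ)) = -(α ^ 2 / (N:ℝ) ^ 2) := by ring
    rw [hεdef, hinv, mul_add, ← mul_assoc, ← mul_assoc, e1, e2]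
    ring
  rw [ge_iff_le]
  show -(α ^ 2 / (N : ℝ) ^ 2) * S ≤ S' + α * ‖u j0 0‖ ^ 2
  linarith [hmul, hid1.symm.le, hid2.le]
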